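/- Let C ∈ ℝ^{N×(N−1)} be a fixed matrix, and let σ ≥ 0 and ρ > 0 be real constants. Then the augmented Lagrangian function ℒ_ρ(w, σ) = λ_max(Cᵀ·diag(w)·C) + (ρ/2)·( max{ 0, 1 − λ_min(Cᵀ·diag(w)·C) + σ/ρ } )² is a convex function of w ∈ ℝ^N. -/

import Mathlib

open Matrix

section aux

variable {n : Type*} [Fintype n] [DecidableEq n]

lemma qf_decomp (A : Matrix n n ℝ) (hA : A.IsHermitian) (x : n → ℝ) :
    ∃ y : n → ℝ, x ⬝ᵥ A *ᵥ x = ∑ i, hA.eigenvalues i * (y i) ^ 2 ∧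
      x ⬝ᵥ x = ∑ i, (y i) ^ 2 := by
  set U : Matrix n n ℝ := (hA.eigenvectorUnitary : Matrix n n ℝ) with hU
  have hsU : star U = Uᵀ := by
    rw [Matrix.star_eq_conjTranspose, Matrix.conjTranspose_eq_transpose_of_trivial]
  have hUU : U * Uᵀ = 1 := by
    rw [← hsU]; exact (Matrix.mem_unitaryGroup_iff).mp hA.eigenvectorUnitary.2
  refine ⟨Uᵀ *ᵥ x, ?_, ?_⟩
  · conv_lhs => rw [hA.spectral_theorem]
    rw [Unitary.conjStarAlgAut_apply, ← hU, hsU]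
    have : (U * diagonal (RCLike.ofReal ∘ hA.eigenvalues) * Uᵀ) *ᵥ x
        = U *ᵥ (diagonal (RCLike.ofReal ∘ hA.eigenvalues) *ᵥ (Uᵀ *ᵥ x)) := by
      rw [mulVec_mulVec, mulVec_mulVec]
    rw [this, dotProduct_mulVec, ← mulVec_transpose]
    simp only [dotProduct, mulVec_diagonal, Function.comp_apply, RCLike.ofReal_real_eq_id,
      id_eq]
    congr 1; ext i; ring
  · have : (Uᵀ *ᵥ x) ⬝ᵥ (Uᵀ *ᵥ x) = x ⬝ᵥ x := by
      rw [dotProduct_mulVec, vecMul_transpose, mulVec_mulVec, hUU, one_mulVec]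
    rw [← this]
    simp only [dotProduct]
    congr 1; ext i; ring

lemma qf_le_iSup [Nonempty n] (A : Matrix n n ℝ) (hA : A.IsHermitian) (x : n → ℝ)
    (hx : x ⬝ᵥ x = 1) : x ⬝ᵥ A *ᵥ x ≤ ⨆ i, hA.eigenvalues i := by
  obtain ⟨y, h1, h2⟩ := qf_decomp A hA x
  have hb : BddAbove (Set.range hA.eigenvalues) := Set.Finite.bddAbove (Set.finite_range _)
  calc x ⬝ᵥ A *ᵥ x = ∑ i, hA.eigenvalues i * y i ^ 2 := h1
    _ ≤ ∑ i, (⨆ j, hA.eigenvalues j) * y i ^ 2 :=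
        Finset.sum_le_sum fun i _ => mul_le_mul_of_nonneg_right (le_ciSup hb i) (sq_nonneg _)
    _ = ⨆ j, hA.eigenvalues j := by rw [← Finset.mul_sum, ← h2, hx, mul_one]

lemma iInf_le_qf [Nonempty n] (A : Matrix n n ℝ) (hA : A.IsHermitian) (x : n → ℝ)
    (hx : x ⬝ᵥ x = 1) : (⨅ i, hA.eigenvalues i) ≤ x ⬝ᵥ A *ᵥ x := by
  obtain ⟨y, h1, h2⟩ := qf_decomp A hA x
  have hb : BddBelow (Set.range hA.eigenvalues) := Set.Finite.bddBelow (Set.finite_range _)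
  calc (⨅ j, hA.eigenvalues j) = ∑ i, (⨅ j, hA.eigenvalues j) * y i ^ 2 := by
        rw [← Finset.mul_sum, ← h2, hx, mul_one]
    _ ≤ ∑ i, hA.eigenvalues i * y i ^ 2 :=
        Finset.sum_le_sum fun i _ => mul_le_mul_of_nonneg_right (ciInf_le hb i) (sq_nonneg _)
    _ = x ⬝ᵥ A *ᵥ x := h1.symm

lemma qf_eigen (A : Matrix n n ℝ) (hA : A.IsHermitian) (i : n) :
    (⇑(hA.eigenvectorBasis i) : n → ℝ) ⬝ᵥ A *ᵥ ⇑(hA.eigenvectorBasis i)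
      = hA.eigenvalues i := by
  have := hA.eigenvalues_eq i
  simpa using this.symm

lemma eigen_unit (A : Matrix n n ℝ) (hA : A.IsHermitian) (i : n) :
    (⇑(hA.eigenvectorBasis i) : n → ℝ) ⬝ᵥ ⇑(hA.eigenvectorBasis i) = 1 := by
  have h1 : ‖hA.eigenvectorBasis i‖ = 1 := hA.eigenvectorBasis.orthonormal.1 i
  have h2 : (inner ℝ (hA.eigenvectorBasis i) (hA.eigenvectorBasis i) : ℝ) = 1 := by
    rw [real_inner_self_eq_norm_mul_norm, h1, mul_one]
  rw [← h2]
  rw [EuclideanSpace.inner_eq_star_dotProduct, star_trivial]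

lemma convexOn_sq_of_nonneg {E : Type*} [AddCommMonoid E] [SMul ℝ E] {s : Set E} {f : E → ℝ}
    (hf : ConvexOn ℝ s f) (h0 : ∀ x ∈ s, 0 ≤ f x) :
    ConvexOn ℝ s (fun x => f x ^ 2) := by
  refine ⟨hf.1, fun x hx y hy a b ha hb hab => ?_⟩
  have hmem := hf.1 hx hy ha hb hab
  have h1 : f (a • x + b • y) ≤ a * f x + b * f y := by
    simpa [smul_eq_mul] using hf.2 hx hy ha hb hab
  have h2 : (0:ℝ) ≤ f (a • x + b • y) := h0 _ hmem
  have h3 : f (a • x + b • y) ^ 2 ≤ (a * f x + b * f y) ^ 2 := by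
    apply pow_le_pow_left₀ h2 h1
  have h4 : (a * f x + b * f y) ^ 2 ≤ a * f x ^ 2 + b * f y ^ 2 := by
    nlinarith [sq_nonneg (f x - f y), mul_nonneg ha hb]
  simpa [smul_eq_mul] using h3.trans h4

end aux

/-- For a fixed matrix `C ∈ ℝ^{N×(N-1)}` and constants `σ ≥ 0`, `ρ > 0`, the augmented
Lagrangian `w ↦ λ_max(Cᵀ diag(w) C) + (ρ/2) * (max {0, 1 - λ_min(Cᵀ diag(w) C) + σ/ρ})²`
is a convex function of `w ∈ ℝ^N`. -/
theorem augmented_lagrangian_convex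
    {N : ℕ} (C : Matrix (Fin N) (Fin (N - 1)) ℝ)
    (herm : ∀ w : Fin N → ℝ, (Cᵀ * Matrix.diagonal w * C).IsHermitian)
    (σ ρ : ℝ) (hσ : 0 ≤ σ) (hρ : 0 < ρ) :
    ConvexOn ℝ Set.univ (fun w : Fin N → ℝ =>
      (⨆ i, (herm w).eigenvalues i) +
        ρ / 2 * (max 0 (1 - (⨅ i, (herm w).eigenvalues i) + σ / ρ)) ^ 2) := by
  by_cases hNE : Nonempty (Fin (N - 1))
  case neg =>
    have hE : IsEmpty (Fin (N - 1)) := not_nonempty_iff.mp hNE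
    simp only [Real.iSup_of_isEmpty, Real.iInf_of_isEmpty]
    exact convexOn_const _ convex_univ
  case pos =>
    have hcomb : ∀ (u v : Fin N → ℝ) (a b : ℝ),
        Cᵀ * Matrix.diagonal (a • u + b • v) * C
          = a • (Cᵀ * Matrix.diagonal u * C) + b • (Cᵀ * Matrix.diagonal v * C) := by
      intro u v a b
      have hd : Matrix.diagonal (a • u + b • v)
          = a • Matrix.diagonal u + b • Matrix.diagonal v := by
        ext i j
        rcases eq_or_ne i j with h | h <;>
          simp [Matrix.diagonal_apply, h, Pi.add_apply, Pi.smul_apply]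
      rw [hd, Matrix.mul_add, Matrix.add_mul, Matrix.mul_smul, Matrix.smul_mul,
        Matrix.mul_smul, Matrix.smul_mul]
    have hmax : ConvexOn ℝ Set.univ (fun w : Fin N → ℝ => ⨆ i, (herm w).eigenvalues i) := by
      refine ⟨convex_univ, fun u _ v _ a b ha hb hab => ?_⟩
      simp only [smul_eq_mul]
      refine ciSup_le fun i => ?_
      set z : Fin (N - 1) → ℝ := ⇑((herm (a • u + b • v)).eigenvectorBasis i) with hz
      have hz1 : z ⬝ᵥ z = 1 := eigen_unit _ _ i
      have he : (herm (a • u + b • v)).eigenvalues i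
          = z ⬝ᵥ (Cᵀ * Matrix.diagonal (a • u + b • v) * C) *ᵥ z := (qf_eigen _ _ i).symm
      rw [he, hcomb u v a b, add_mulVec, smul_mulVec, smul_mulVec,
        dotProduct_add, dotProduct_smul, dotProduct_smul, smul_eq_mul, smul_eq_mul]
      exact add_le_add
        (mul_le_mul_of_nonneg_left (qf_le_iSup _ (herm u) z hz1) ha)
        (mul_le_mul_of_nonneg_left (qf_le_iSup _ (herm v) z hz1) hb)
    have hmin : ConcaveOn ℝ Set.univ (fun w : Fin N → ℝ => ⨅ i, (herm w).eigenvalues i) := by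
      refine ⟨convex_univ, fun u _ v _ a b ha hb hab => ?_⟩
      simp only [smul_eq_mul]
      refine le_ciInf fun i => ?_
      set z : Fin (N - 1) → ℝ := ⇑((herm (a • u + b • v)).eigenvectorBasis i) with hz
      have hz1 : z ⬝ᵥ z = 1 := eigen_unit _ _ i
      have he : (herm (a • u + b • v)).eigenvalues i
          = z ⬝ᵥ (Cᵀ * Matrix.diagonal (a • u + b • v) * C) *ᵥ z := (qf_eigen _ _ i).symm
      rw [he, hcomb u v a b, add_mulVec, smul_mulVec, smul_mulVec,
        dotProduct_add, dotProduct_smul, dotProduct_smul, smul_eq_mul, smul_eq_mul]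
      exact add_le_add
        (mul_le_mul_of_nonneg_left (iInf_le_qf _ (herm u) z hz1) ha)
        (mul_le_mul_of_nonneg_left (iInf_le_qf _ (herm v) z hz1) hb)
    -- inner affine part is convex
    have hlin : ConvexOn ℝ Set.univ
        (fun w : Fin N → ℝ => 1 - (⨅ i, (herm w).eigenvalues i) + σ / ρ) := by
      have h1 : ConvexOn ℝ Set.univ
          (fun w : Fin N → ℝ => -(⨅ i, (herm w).eigenvalues i)) := hmin.neg
      have := h1.add (convexOn_const (1 + σ / ρ) convex_univ)
      convert this using 2 with w
      · rfl
      simp only [Pi.add_apply]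
      ring
    have hg : ConvexOn ℝ Set.univ
        (fun w : Fin N → ℝ => max 0 (1 - (⨅ i, (herm w).eigenvalues i) + σ / ρ)) := by
      have := (convexOn_const (0 : ℝ) convex_univ).sup hlin
      exact this
    have hg2 : ConvexOn ℝ Set.univ
        (fun w : Fin N → ℝ =>
          (max 0 (1 - (⨅ i, (herm w).eigenvalues i) + σ / ρ)) ^ 2) := by
      exact convexOn_sq_of_nonneg hg (fun w _ => le_max_left (0:ℝ) _)
    have hρ2 : (0:ℝ) ≤ ρ / 2 := by positivity
    have hsc := hg2.smul hρ2
    have := hmax.add hsc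
    convert this using 2 with w
    · rfl
    · simp [smul_eq_mul]
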